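/- If Z ~ N(m, σ²) with σ > 0 and z* ∈ ℝ, let EI = E[(z* - Z)^+]. Then Var((z* - Z)^+) = EI·(z* - m - EI) + σ²·Φ((z* - m)/σ), where Φ is the standard normal CDF. -/

import Mathlib

open MeasureTheory ProbabilityTheory Set Filter Real
open scoped ENNReal NNReal

/-- The standard normal density. -/
noncomputable def stdNormalPDF (s : ℝ) : ℝ :=
  (Real.sqrt (2 * Real.pi))⁻¹ * Real.exp (-s ^ 2 / 2)

/-- The standard normal cumulative distribution function. -/
noncomputable def stdNormalCDF (t : ℝ) : ℝ :=
  ∫ s in Set.Iic t, stdNormalPDF s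

lemma stdNormalPDF_nonneg (s : ℝ) : 0 ≤ stdNormalPDF s := by
  unfold stdNormalPDF; positivity

lemma stdNormalPDF_continuous : Continuous stdNormalPDF := by
  unfold stdNormalPDF; fun_prop

lemma exp_form (s : ℝ) : Real.exp (-s ^ 2 / 2) = Real.exp (-(1/2 : ℝ) * s ^ 2) := by
  ring_nf

lemma integrable_pow_mul_pdf (k : ℕ) :
    Integrable (fun s : ℝ => s ^ k * stdNormalPDF s) := by
  have h := integrable_rpow_mul_exp_neg_mul_sq (b := (1/2 : ℝ)) (by norm_num)
    (s := (k : ℝ)) (by exact_mod_cast neg_one_lt_zero.trans_le (Nat.cast_nonneg k))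
  have h2 : Integrable (fun s : ℝ => s ^ k * Real.exp (-(1/2 : ℝ) * s ^ 2)) := by
    simpa [Real.rpow_natCast] using h
  have := h2.const_mul ((Real.sqrt (2 * Real.pi))⁻¹)
  refine this.congr (by filter_upwards with s; unfold stdNormalPDF; rw [exp_form]; ring)

lemma integrable_pdf : Integrable stdNormalPDF := by
  simpa using integrable_pow_mul_pdf 0

lemma hasDerivAt_pdf (s : ℝ) :
    HasDerivAt (fun t => -stdNormalPDF t) (s * stdNormalPDF s) s := by
  have h1 : HasDerivAt (fun t : ℝ => -t ^ 2 / 2) (-s) s := by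
    have := ((hasDerivAt_pow 2 s).neg).div_const 2
    simpa using this.congr_deriv (by push_cast; ring)
  have h2 := (h1.exp.const_mul ((Real.sqrt (2 * Real.pi))⁻¹)).neg
  refine h2.congr_deriv ?_
  unfold stdNormalPDF; ring

lemma tendsto_pdf_atBot : Tendsto stdNormalPDF atBot (nhds 0) := by
  have h1 : Tendsto (fun s : ℝ => -s ^ 2 / 2) atBot atBot := by
    apply Tendsto.atBot_div_const (by norm_num)
    apply tendsto_neg_atTop_atBot.comp
    have : Tendsto (fun s : ℝ => |s| ^ 2) atBot atTop :=
      (tendsto_pow_atTop (two_ne_zero)).comp tendsto_abs_atBot_atTop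
    simpa [sq_abs] using this
  have := (Real.tendsto_exp_atBot.comp h1).const_mul ((Real.sqrt (2 * Real.pi))⁻¹)
  show Tendsto (fun s : ℝ => (Real.sqrt (2 * Real.pi))⁻¹ * Real.exp (-s ^ 2 / 2)) atBot (nhds 0)
  simpa only [stdNormalPDF, Function.comp_def, mul_zero] using this

lemma tendsto_mul_pdf_atBot : Tendsto (fun s => s * stdNormalPDF s) atBot (nhds 0) := by
  have hlo := Asymptotics.IsLittleO.tendsto_zero_of_tendsto
    (rpow_mul_exp_neg_mul_sq_isLittleO_exp_neg (b := (1/2:ℝ)) (by norm_num) 1)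
    (Real.tendsto_exp_atBot.comp (tendsto_id.const_mul_atTop_of_neg (by norm_num : (-(1/2):ℝ) < 0)))
  have hT : Tendsto (fun t : ℝ => t * Real.exp (-t ^ 2 / 2)) atTop (nhds 0) := by
    refine hlo.congr' ?_
    filter_upwards with t
    rw [Real.rpow_one]; congr 1; ring
  have h2 : Tendsto (fun s : ℝ => -((-s) * Real.exp (-(-s) ^ 2 / 2))) atBot (nhds 0) := by
    simpa using ((hT.comp tendsto_neg_atBot_atTop).neg)
  have h3 : Tendsto (fun s : ℝ => s * Real.exp (-s ^ 2 / 2)) atBot (nhds 0) := by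
    refine h2.congr ?_
    intro s; simp
  have := h3.const_mul ((Real.sqrt (2 * Real.pi))⁻¹)
  simpa [stdNormalPDF, mul_comm, mul_left_comm, mul_assoc] using this

lemma integral_Iic_pdf (α : ℝ) : ∫ s in Iic α, stdNormalPDF s = stdNormalCDF α := rfl

lemma integral_Iic_mul_pdf (α : ℝ) :
    ∫ s in Iic α, s * stdNormalPDF s = -stdNormalPDF α := by
  have h := integral_Iic_of_hasDerivAt_of_tendsto' (f := fun t => -stdNormalPDF t)
    (f' := fun s => s * stdNormalPDF s) (a := α) (m := 0)
    (fun x _ => hasDerivAt_pdf x)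
    (by simpa using (integrable_pow_mul_pdf 1).integrableOn)
    (by simpa using tendsto_pdf_atBot.neg)
  simpa using h

lemma hasDerivAt_mul_pdf (s : ℝ) :
    HasDerivAt (fun t => -(t * stdNormalPDF t)) ((s ^ 2 - 1) * stdNormalPDF s) s := by
  have hp : HasDerivAt stdNormalPDF (-(s * stdNormalPDF s)) s := by
    simpa [Pi.neg_def] using (hasDerivAt_pdf s).neg
  refine ((hasDerivAt_id s).mul hp).neg.congr_deriv ?_
  simp [id]; ring

lemma integral_Iic_sq_mul_pdf (α : ℝ) :
    ∫ s in Iic α, s ^ 2 * stdNormalPDF s = stdNormalCDF α - α * stdNormalPDF α := by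
  have hint2 : IntegrableOn (fun s : ℝ => (s ^ 2 - 1) * stdNormalPDF s) (Iic α) := by
    have := ((integrable_pow_mul_pdf 2).sub (by simpa using integrable_pow_mul_pdf 0)).integrableOn
      (s := Iic α)
    refine this.congr_fun (fun x _ => by simp [Pi.sub_apply]; ring) measurableSet_Iic
  have h := integral_Iic_of_hasDerivAt_of_tendsto' (f := fun t => -(t * stdNormalPDF t))
    (f' := fun s => (s ^ 2 - 1) * stdNormalPDF s) (a := α) (m := 0)
    (fun x _ => hasDerivAt_mul_pdf x) hint2
    (by simpa using tendsto_mul_pdf_atBot.neg)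
  have hsplit : ∀ s : ℝ, s ^ 2 * stdNormalPDF s
      = (s ^ 2 - 1) * stdNormalPDF s + stdNormalPDF s := fun s => by ring
  rw [show (fun s : ℝ => s ^ 2 * stdNormalPDF s) = _ from funext hsplit] at *
  rw [integral_add hint2 integrable_pdf.integrableOn, h, integral_Iic_pdf]
  ring

section moments
variable {c σ : ℝ}

lemma integrable_lin (hσ : 0 < σ) (c : ℝ) :
    Integrable (fun s : ℝ => stdNormalPDF s * (c - σ * s)) := by
  have := (integrable_pdf.const_mul c).sub ((integrable_pow_mul_pdf 1).const_mul σ)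
  refine this.congr (by filter_upwards with s; simp; ring)

lemma integrable_sq' (hσ : 0 < σ) (c : ℝ) :
    Integrable (fun s : ℝ => stdNormalPDF s * (c - σ * s) ^ 2) := by
  have := (((integrable_pow_mul_pdf 2).const_mul (σ^2)).add
    ((integrable_pow_mul_pdf 1).const_mul (-(2*c*σ)))).add (integrable_pdf.const_mul (c^2))
  refine this.congr (by filter_upwards with s; simp; ring)

lemma indicator_eq (hσ : 0 < σ) (k : ℕ) (hk : k ≠ 0) :
    (fun s : ℝ => stdNormalPDF s * (max (c - σ * s) 0) ^ k)
      = Set.indicator (Iic (c / σ)) (fun s => stdNormalPDF s * (c - σ * s) ^ k) := by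
  funext s
  by_cases h : s ≤ c / σ
  · rw [Set.indicator_of_mem (Set.mem_Iic.2 h)]
    have hge : 0 ≤ c - σ * s := by
      have := mul_le_mul_of_nonneg_left h hσ.le
      rw [mul_div_cancel₀ _ hσ.ne'] at this
      linarith
    rw [max_eq_left hge]
  · rw [Set.indicator_of_notMem (by simpa using h)]
    have hlt : c - σ * s < 0 := by
      rw [not_le] at h
      have := mul_lt_mul_of_pos_left h hσ
      rw [mul_div_cancel₀ _ hσ.ne'] at this
      linarith
    rw [max_eq_right hlt.le, zero_pow hk, mul_zero]

lemma integrable_impr (hσ : 0 < σ) (c : ℝ) (k : ℕ) (hk : k ≠ 0)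
    (h : Integrable (fun s : ℝ => stdNormalPDF s * (c - σ * s) ^ k)) :
    Integrable (fun s : ℝ => stdNormalPDF s * (max (c - σ * s) 0) ^ k) := by
  rw [indicator_eq hσ k hk]
  exact (integrable_indicator_iff measurableSet_Iic).2 h.integrableOn

lemma integral_impr_one (hσ : 0 < σ) (c : ℝ) :
    ∫ s, stdNormalPDF s * max (c - σ * s) 0 =
      c * stdNormalCDF (c / σ) + σ * stdNormalPDF (c / σ) := by
  have h1 : (fun s : ℝ => stdNormalPDF s * max (c - σ * s) 0)
      = Set.indicator (Iic (c / σ)) (fun s => stdNormalPDF s * (c - σ * s) ^ 1) := by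
    simpa using indicator_eq hσ 1 one_ne_zero (c := c)
  rw [h1, integral_indicator measurableSet_Iic]
  have : ∀ s : ℝ, stdNormalPDF s * (c - σ * s) ^ 1
      = c * stdNormalPDF s - σ * (s * stdNormalPDF s) := fun s => by ring
  rw [show (fun s : ℝ => stdNormalPDF s * (c - σ * s) ^ 1) = _ from funext this]
  have j0 : IntegrableOn (fun s : ℝ => c * stdNormalPDF s) (Iic (c / σ)) :=
    (integrable_pdf.const_mul c).integrableOn
  have j1 : IntegrableOn (fun s : ℝ => σ * (s * stdNormalPDF s)) (Iic (c / σ)) :=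
    (((integrable_pow_mul_pdf 1).congr (by filter_upwards with s; simp)).const_mul σ).integrableOn
  rw [integral_sub j0 j1, integral_const_mul, integral_const_mul, integral_Iic_pdf,
    integral_Iic_mul_pdf]
  ring

lemma integral_impr_two (hσ : 0 < σ) (c : ℝ) :
    ∫ s, stdNormalPDF s * (max (c - σ * s) 0) ^ 2 =
      (c ^ 2 + σ ^ 2) * stdNormalCDF (c / σ) + c * σ * stdNormalPDF (c / σ) := by
  rw [indicator_eq hσ 2 two_ne_zero, integral_indicator measurableSet_Iic]
  have : ∀ s : ℝ, stdNormalPDF s * (c - σ * s) ^ 2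
      = (c ^ 2 * stdNormalPDF s - 2 * c * σ * (s * stdNormalPDF s))
        + σ ^ 2 * (s ^ 2 * stdNormalPDF s) := fun s => by ring
  rw [show (fun s : ℝ => stdNormalPDF s * (c - σ * s) ^ 2) = _ from funext this]
  have i0 : IntegrableOn (fun s : ℝ => c ^ 2 * stdNormalPDF s) (Iic (c / σ)) :=
    (integrable_pdf.const_mul _).integrableOn
  have i1 : IntegrableOn (fun s : ℝ => 2 * c * σ * (s * stdNormalPDF s)) (Iic (c / σ)) :=
    (((integrable_pow_mul_pdf 1).congr (by filter_upwards with s; simp)).const_mul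
      _).integrableOn
  have i2 : IntegrableOn (fun s : ℝ => σ ^ 2 * (s ^ 2 * stdNormalPDF s)) (Iic (c / σ)) :=
    ((integrable_pow_mul_pdf 2).const_mul _).integrableOn
  have i01 : IntegrableOn (fun s : ℝ => c ^ 2 * stdNormalPDF s
      - 2 * c * σ * (s * stdNormalPDF s)) (Iic (c / σ)) := i0.sub i1
  rw [integral_add i01 i2, integral_sub i0 i1, integral_const_mul, integral_const_mul,
    integral_const_mul, integral_Iic_pdf, integral_Iic_mul_pdf, integral_Iic_sq_mul_pdf]
  field_simp
  ring

end moments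

lemma gaussianPDFReal_std : gaussianPDFReal 0 1 = stdNormalPDF := by
  funext s
  simp [gaussianPDFReal, stdNormalPDF]

lemma stdGaussian_withDensity :
    gaussianReal 0 1 = volume.withDensity (fun x => ((stdNormalPDF x).toNNReal : ℝ≥0∞)) := by
  rw [gaussianReal_of_var_ne_zero 0 one_ne_zero]
  congr 1
  funext x
  rw [gaussianPDF, gaussianPDFReal_std]
  rfl

lemma integral_stdGaussian (h : ℝ → ℝ) :
    ∫ x, h x ∂(gaussianReal 0 1) = ∫ x, stdNormalPDF x * h x := by
  rw [stdGaussian_withDensity, integral_withDensity_eq_integral_smul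
    (stdNormalPDF_continuous.measurable.real_toNNReal) h]
  congr 1
  funext x
  rw [NNReal.smul_def, Real.coe_toNNReal _ (stdNormalPDF_nonneg x), smul_eq_mul]

lemma integrable_stdGaussian_iff (h : ℝ → ℝ) :
    Integrable h (gaussianReal 0 1) ↔ Integrable (fun x => stdNormalPDF x * h x) := by
  rw [stdGaussian_withDensity, integrable_withDensity_iff
    (stdNormalPDF_continuous.measurable.real_toNNReal.coe_nnreal_ennreal)
    (Filter.Eventually.of_forall fun x => ENNReal.coe_lt_top)]
  constructor <;> intro hh <;> refine hh.congr ?_ <;>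
    filter_upwards with x <;>
    simp [Real.coe_toNNReal _ (stdNormalPDF_nonneg x), mul_comm]

lemma gaussian_eq_map (m σ : ℝ) (hσ : 0 < σ) :
    gaussianReal m ((σ ^ 2).toNNReal) = (gaussianReal 0 1).map (fun s => σ * s + m) := by
  have h1 : (gaussianReal 0 1).map (fun s => σ * s) = gaussianReal 0 ((σ ^ 2).toNNReal) := by
    rw [gaussianReal_map_const_mul]
    congr 1
    · simp
    · ext
      simp [Real.toNNReal, max_eq_left (sq_nonneg σ)]
  have h2 : ((gaussianReal 0 1).map (fun s => σ * s)).map (· + m)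
      = (gaussianReal 0 1).map (fun s => σ * s + m) := by
    rw [Measure.map_map (measurable_add_const m) (measurable_const_mul σ)]
    rfl
  rw [← h2, h1, gaussianReal_map_add_const]
  simp

/-- Variance of the improvement: if `Z ~ N(m, σ²)` with `σ > 0`, `z* ∈ ℝ` and
`EI = E[(z* - Z)⁺]`, then `Var((z* - Z)⁺) = EI (z* - m - EI) + σ² Φ((z* - m)/σ)`. -/
theorem improvement_variance_closed_form
    {Ω : Type*} [MeasurableSpace Ω] (μ : Measure Ω) [IsProbabilityMeasure μ]
    (Z : Ω → ℝ) (m σ : ℝ) (hσ : 0 < σ)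
    (hZ : μ.map Z = gaussianReal m (Real.toNNReal (σ ^ 2)))
    (zstar : ℝ)
    (EI : ℝ) (hEI : EI = ∫ ω, max (zstar - Z ω) 0 ∂μ) :
    variance (fun ω => max (zstar - Z ω) 0) μ =
      EI * (zstar - m - EI) + σ ^ 2 * stdNormalCDF ((zstar - m) / σ) := by
  set c := zstar - m with hc
  have harg : ∀ s : ℝ, zstar - (σ * s + m) = c - σ * s := fun s => by rw [hc]; ring
  have hAmeas : Measurable (fun s : ℝ => σ * s + m) := (measurable_const_mul σ).add_const m
  have hZae : AEMeasurable Z μ := by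
    by_contra h
    rw [Measure.map_of_not_aemeasurable h] at hZ
    have h1 : (gaussianReal m (Real.toNNReal (σ ^ 2))) univ = 1 := measure_univ
    rw [← hZ] at h1
    simp at h1
  have hmap : μ.map Z = (gaussianReal 0 1).map (fun s => σ * s + m) := by
    rw [hZ, gaussian_eq_map m σ hσ]
  have key : ∀ g : ℝ → ℝ, Continuous g →
      (∫ ω, g (Z ω) ∂μ = ∫ s, stdNormalPDF s * g (σ * s + m)) ∧
      (Integrable (fun s => stdNormalPDF s * g (σ * s + m)) →
        Integrable (fun ω => g (Z ω)) μ) := by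
    intro g hg
    constructor
    · rw [← integral_map hZae hg.aestronglyMeasurable, hmap,
        integral_map hAmeas.aemeasurable hg.aestronglyMeasurable,
        integral_stdGaussian]
    · intro hint
      have h1 : Integrable (fun s => g (σ * s + m)) (gaussianReal 0 1) :=
        (integrable_stdGaussian_iff _).2 hint
      have h2 : Integrable g ((gaussianReal 0 1).map (fun s => σ * s + m)) :=
        (integrable_map_measure hg.aestronglyMeasurable hAmeas.aemeasurable).2 h1
      rw [← hmap] at h2
      exact (integrable_map_measure (by rw [hmap]; exact hg.aestronglyMeasurable) hZae).1 h2
  have hg1 : Continuous (fun x : ℝ => max (zstar - x) 0) :=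
    (continuous_const.sub continuous_id).max continuous_const
  have hg2 : Continuous (fun x : ℝ => (max (zstar - x) 0) ^ 2) := hg1.pow 2
  -- first moment
  have hEX : ∫ ω, max (zstar - Z ω) 0 ∂μ
      = c * stdNormalCDF (c / σ) + σ * stdNormalPDF (c / σ) := by
    rw [(key _ hg1).1]
    rw [show (fun s : ℝ => stdNormalPDF s * max (zstar - (σ * s + m)) 0)
        = fun s => stdNormalPDF s * max (c - σ * s) 0 from funext fun s => by rw [harg s]]
    exact integral_impr_one hσ c
  -- second moment
  have hEX2 : ∫ ω, (max (zstar - Z ω) 0) ^ 2 ∂μ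
      = (c ^ 2 + σ ^ 2) * stdNormalCDF (c / σ) + c * σ * stdNormalPDF (c / σ) := by
    rw [(key _ hg2).1]
    rw [show (fun s : ℝ => stdNormalPDF s * (max (zstar - (σ * s + m)) 0) ^ 2)
        = fun s => stdNormalPDF s * (max (c - σ * s) 0) ^ 2 from funext fun s => by rw [harg s]]
    exact integral_impr_two hσ c
  -- integrability of the square
  have hint2 : Integrable (fun ω => (max (zstar - Z ω) 0) ^ 2) μ := by
    refine (key _ hg2).2 ?_
    rw [show (fun s : ℝ => stdNormalPDF s * (max (zstar - (σ * s + m)) 0) ^ 2)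
        = fun s => stdNormalPDF s * (max (c - σ * s) 0) ^ 2 from funext fun s => by rw [harg s]]
    exact integrable_impr hσ c 2 two_ne_zero (integrable_sq' hσ c)
  have hXsm : AEStronglyMeasurable (fun ω => max (zstar - Z ω) 0) μ :=
    (hg1.measurable.comp_aemeasurable hZae).aestronglyMeasurable
  have hMem : MemLp (fun ω => max (zstar - Z ω) 0) 2 μ :=
    (memLp_two_iff_integrable_sq hXsm).2 hint2
  rw [variance_eq_sub hMem]
  have hEI' : EI = c * stdNormalCDF (c / σ) + σ * stdNormalPDF (c / σ) := hEI.trans hEX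
  simp only [Pi.pow_apply]
  rw [hEX2, ← hEI, hEI']
  ring
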